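/- Exponential stability transfer: under the hypotheses of the main transfer theorem with f globally Lipschitz in the second argument with constant L uniformly in the first, if the system is (W, H)-globally exponentially stable with constants C₀, κ > 0 (i.e., ‖x(t)‖ ≤ C₀ e^{−κt}‖x_0‖_W for x_0 ∈ W), then it is (C⁰, H)-globally exponentially stable: for every continuous x_0 and ζ ∈ H, ‖x(t)‖ ≤ C̃₀ e^{−κ t} ‖x_0‖_∞ for all t ≥ 0, with C̃₀ = max((1 + e^{L h_M}) e^{κ h_M}, C₀ e^{κ h_M} (1 + e^{L h_M}) √(1 + h_M L²)). -/

import Mathlib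

open MeasureTheory Real Set intervalIntegral

/-- Sup norm of a function over the delay window `[-h_M, 0]`. -/
noncomputable def segSup {n : ℕ} (hM : ℝ) (φ : ℝ → EuclideanSpace ℝ (Fin n)) : ℝ :=
  ⨆ τ : Set.Icc (-hM) (0:ℝ), ‖φ τ‖

/-- The segment `x_t = x(t + ·)`. -/
def seg {n : ℕ} (x : ℝ → EuclideanSpace ℝ (Fin n)) (t : ℝ) :
    ℝ → EuclideanSpace ℝ (Fin n) := fun τ => x (t + τ)

/-- Global solution of the retarded equation `ẋ(t) = f(ζ(t), x_t)` on `ℝ₊` with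
initial condition `x₀` on `[-h_M, 0]`. -/
def IsSolution {n r : ℕ} (hM : ℝ)
    (f : (Fin r → ℝ) → (ℝ → EuclideanSpace ℝ (Fin n)) → EuclideanSpace ℝ (Fin n))
    (ζ : ℝ → Fin r → ℝ) (x₀ x : ℝ → EuclideanSpace ℝ (Fin n)) : Prop :=
  ContinuousOn x (Set.Ici (-hM)) ∧
  (∀ τ ∈ Set.Icc (-hM) (0:ℝ), x τ = x₀ τ) ∧
  ∀ t ≥ (0:ℝ), HasDerivWithinAt x (f (ζ t) (seg x t)) (Set.Ici t) t

/-- `x₀` is in `W`, with weak derivative `g`. -/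
def InW {n : ℕ} (hM : ℝ) (x₀ g : ℝ → EuclideanSpace ℝ (Fin n)) : Prop :=
  ContinuousOn x₀ (Set.Icc (-hM) 0) ∧
  MeasureTheory.IntegrableOn g (Set.Icc (-hM) 0) ∧
  (∀ t ∈ Set.Icc (-hM) (0:ℝ), x₀ 0 - x₀ t = ∫ s in t..0, g s) ∧
  MeasureTheory.IntegrableOn (fun s => ‖g s‖ ^ 2) (Set.Icc (-hM) 0)

/-- The `W`-norm of `x₀ ∈ W` with weak derivative `g`. -/
noncomputable def Wnorm {n : ℕ} (hM : ℝ) (x₀ g : ℝ → EuclideanSpace ℝ (Fin n)) : ℝ :=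
  Real.sqrt (‖x₀ 0‖ ^ 2 + ∫ s in (-hM)..0, ‖g s‖ ^ 2)

/-- Class `K` comparison function. -/
def ClassK (α : ℝ → ℝ) : Prop :=
  ContinuousOn α (Set.Ici 0) ∧ StrictMonoOn α (Set.Ici 0) ∧ α 0 = 0

/-- Forward invariance of a set of input signals. -/
def FwdInv {r : ℕ} (H : Set (ℝ → Fin r → ℝ)) : Prop :=
  ∀ ζ ∈ H, ∀ a > (0:ℝ), (fun t => ζ (t + a)) ∈ H


section Helpers

variable {n : ℕ}

local notation "E" => EuclideanSpace ℝ (Fin n)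

lemma segSup_nonneg (hM : ℝ) (φ : ℝ → E) : 0 ≤ segSup hM φ :=
  Real.iSup_nonneg fun _ => norm_nonneg _

lemma bddAbove_seg {hM : ℝ} {φ : ℝ → E} (hφ : ContinuousOn φ (Set.Icc (-hM) 0)) :
    BddAbove (Set.range fun τ : Set.Icc (-hM) (0:ℝ) => ‖φ τ‖) := by
  have : (Set.range fun τ : Set.Icc (-hM) (0:ℝ) => ‖φ τ‖) = (fun t => ‖φ t‖) '' Set.Icc (-hM) 0 := by
    ext y; simp [Set.mem_image]
  rw [this]
  exact (isCompact_Icc.image_of_continuousOn hφ.norm).bddAbove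

lemma le_segSup {hM : ℝ} {φ : ℝ → E} (hφ : ContinuousOn φ (Set.Icc (-hM) 0))
    {τ : ℝ} (hτ : τ ∈ Set.Icc (-hM) (0:ℝ)) : ‖φ τ‖ ≤ segSup hM φ :=
  le_ciSup (bddAbove_seg hφ) ⟨τ, hτ⟩

lemma segSup_le {hM M : ℝ} {φ : ℝ → E} (hm : 0 ≤ M)
    (h : ∀ τ ∈ Set.Icc (-hM) (0:ℝ), ‖φ τ‖ ≤ M) : segSup hM φ ≤ M :=
  Real.iSup_le (fun τ => h τ τ.2) hm

end Helpers

section Helpers2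

variable {n r : ℕ}

local notation "E" => EuclideanSpace ℝ (Fin n)

lemma f_congr_window {hM L : ℝ} (hhM : 0 < hM) {A : Set (Fin r → ℝ)}
    {f : (Fin r → ℝ) → (ℝ → E) → E}
    (hfLip : ∀ ξ ∈ A, ∀ φ ψ : ℝ → E,
      ‖f ξ φ - f ξ ψ‖ ≤ L * segSup hM (fun τ => φ τ - ψ τ))
    {ξ : Fin r → ℝ} (hξ : ξ ∈ A) {φ ψ : ℝ → E}
    (h : ∀ τ ∈ Set.Icc (-hM) (0:ℝ), φ τ = ψ τ) : f ξ φ = f ξ ψ := by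
  have h1 : segSup hM (fun τ => φ τ - ψ τ) = 0 := by
    haveI : Nonempty (Set.Icc (-hM) (0:ℝ)) :=
      Set.Nonempty.to_subtype (Set.nonempty_Icc.2 (by linarith))
    have : ∀ τ : Set.Icc (-hM) (0:ℝ), ‖φ τ - ψ τ‖ = 0 := by
      intro τ; rw [h τ τ.2]; simp
    unfold segSup
    simp only [this]
    exact ciSup_const
  have h2 := hfLip ξ hξ φ ψ
  rw [h1, mul_zero] at h2
  have := le_antisymm h2 (norm_nonneg _)
  rwa [norm_sub_eq_zero_iff] at this

lemma norm_f_le {hM L : ℝ} (hhM : 0 < hM) {A : Set (Fin r → ℝ)}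
    {f : (Fin r → ℝ) → (ℝ → E) → E}
    (hf0 : ∀ ξ ∈ A, f ξ (fun _ => 0) = 0)
    (hfLip : ∀ ξ ∈ A, ∀ φ ψ : ℝ → E,
      ‖f ξ φ - f ξ ψ‖ ≤ L * segSup hM (fun τ => φ τ - ψ τ))
    {ξ : Fin r → ℝ} (hξ : ξ ∈ A) (φ : ℝ → E) :
    ‖f ξ φ‖ ≤ L * segSup hM φ := by
  have h := hfLip ξ hξ φ (fun _ => 0)
  rw [hf0 ξ hξ] at h
  simpa using h

end Helpers2

section Helpers3

variable {n r : ℕ}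

local notation "E" => EuclideanSpace ℝ (Fin n)

lemma cont_f_seg {hM L : ℝ} (hhM : 0 < hM) {A : Set (Fin r → ℝ)}
    {f : (Fin r → ℝ) → (ℝ → E) → E}
    (hfcont : Continuous fun p : (Fin r → ℝ) × C(Set.Icc (-hM) (0:ℝ), E) =>
      f p.1 (fun τ => if h : τ ∈ Set.Icc (-hM) (0:ℝ) then p.2 ⟨τ, h⟩ else 0))
    (hfLip : ∀ ξ ∈ A, ∀ φ ψ : ℝ → E,
      ‖f ξ φ - f ξ ψ‖ ≤ L * segSup hM (fun τ => φ τ - ψ τ))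
    {ζ : ℝ → Fin r → ℝ} (hζc : Continuous ζ) (hζA : ∀ t ≥ (0:ℝ), ζ t ∈ A)
    {x : ℝ → E} (hx : ContinuousOn x (Set.Ici (-hM))) :
    ContinuousOn (fun t => f (ζ t) (seg x t)) (Set.Ici 0) := by
  set x' : ℝ → E := fun t => x (max t (-hM)) with hx'def
  have hx'c : Continuous x' :=
    hx.comp_continuous (continuous_id.max continuous_const) (fun t => Set.mem_Ici.2 (le_max_right _ _))
  have hu : Continuous fun p : ℝ × Set.Icc (-hM) (0:ℝ) => x' (p.1 + p.2) :=
    hx'c.comp (continuous_fst.add (continuous_subtype_val.comp continuous_snd))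
  let U : C(ℝ × Set.Icc (-hM) (0:ℝ), E) := ⟨_, hu⟩
  let Φ : C(ℝ, C(Set.Icc (-hM) (0:ℝ), E)) := U.curry
  have hF : Continuous fun t =>
      f (ζ t) (fun τ => if h : τ ∈ Set.Icc (-hM) (0:ℝ) then (Φ t) ⟨τ, h⟩ else 0) :=
    hfcont.comp (hζc.prodMk Φ.continuous)
  refine hF.continuousOn.congr fun t ht => ?_
  refine f_congr_window hhM hfLip (hζA t ht) fun τ hτ => ?_
  have h1 : t + τ ≥ -hM := by
    have := hτ.1; have : (0:ℝ) ≤ t := ht; nlinarith [hτ.1]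
  simp only [seg, dif_pos hτ]
  show x (t + τ) = x' (t + τ)
  rw [hx'def]
  simp only [max_eq_left h1]

end Helpers3

section Helpers4

variable {n : ℕ}

local notation "E" => EuclideanSpace ℝ (Fin n)

lemma ftc_right {hM : ℝ} (hhM : 0 < hM) {y G : ℝ → E}
    (hy : ContinuousOn y (Set.Ici (-hM)))
    (hG : ContinuousOn G (Set.Ici 0))
    (hd : ∀ t ≥ (0:ℝ), HasDerivWithinAt y (G t) (Set.Ici t) t)
    {a b : ℝ} (ha : 0 ≤ a) (hab : a ≤ b) :
    ∫ s in a..b, G s = y b - y a := by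
  apply intervalIntegral.integral_eq_sub_of_hasDeriv_right_of_le hab
  · exact hy.mono fun s hs => by
      simp only [Set.mem_Ici] at *; linarith [hs.1]
  · intro s hs
    exact (hd s (by linarith [hs.1])).mono Set.Ioi_subset_Ici_self
  · apply ContinuousOn.intervalIntegrable
    apply hG.mono
    rw [Set.uIcc_of_le hab]
    exact fun s hs => by simp only [Set.mem_Ici]; linarith [hs.1]

lemma gronwall_delay {hM L B : ℝ} (hhM : 0 < hM) (hL : 0 < L) (hB : 0 ≤ B)
    {y G : ℝ → E} (hy : ContinuousOn y (Set.Ici (-hM)))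
    (hG : ContinuousOn G (Set.Ici 0))
    (hd : ∀ t ≥ (0:ℝ), HasDerivWithinAt y (G t) (Set.Ici t) t)
    (hGb : ∀ t ≥ (0:ℝ), ‖G t‖ ≤ L * segSup hM (seg y t))
    (h0 : ∀ τ ∈ Set.Icc (-hM) (0:ℝ), ‖y τ‖ ≤ B) :
    ∀ t ≥ (0:ℝ), ‖y t‖ ≤ B * Real.exp (L * t) := by
  intro t ht
  -- it suffices to prove the bound with `B + ε` for every positive `ε`
  suffices h : ∀ ε > 0, ‖y t‖ ≤ (B + ε) * Real.exp (L * t) by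
    by_contra hc
    push_neg at hc
    have hexp : 0 < Real.exp (L * t) := Real.exp_pos _
    set ε := (‖y t‖ - B * Real.exp (L * t)) / (2 * Real.exp (L * t)) with hεdef
    have hε : 0 < ε := by
      apply div_pos (by linarith) (by linarith)
    have := h ε hε
    have h2 : (B + ε) * Real.exp (L * t) = B * Real.exp (L * t) + (‖y t‖ - B * Real.exp (L * t)) / 2 := by
      rw [hεdef, add_mul, div_mul_eq_mul_div, mul_div_mul_right _ _ hexp.ne']
    rw [h2] at this
    linarith
  intro ε hε
  -- continuous extension of `y`
  set y' : ℝ → E := fun s => y (max s (-hM)) with hy'def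
  have hy'c : Continuous y' :=
    hy.comp_continuous (continuous_id.max continuous_const) (fun s => Set.mem_Ici.2 (le_max_right _ _))
  have hy'eq : ∀ s : ℝ, 0 ≤ s → y' s = y s := by
    intro s hs
    rw [hy'def]
    simp only [max_eq_left (by linarith : -hM ≤ s)]
  set S : Set ℝ := {s ∈ Set.Icc 0 t | (B + ε) * Real.exp (L * s) ≤ ‖y' s‖} with hSdef
  have hScl : IsClosed S := by
    have : S = Set.Icc 0 t ∩ {s | (B + ε) * Real.exp (L * s) ≤ ‖y' s‖} := rfl
    rw [this]
    exact isClosed_Icc.inter (isClosed_le (continuous_const.mul (Real.continuous_exp.comp (continuous_const.mul continuous_id))) hy'c.norm)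
  have hSbd : BddBelow S := ⟨0, fun s hs => hs.1.1⟩
  have hy0 : ‖y 0‖ ≤ B := h0 0 ⟨by linarith, le_rfl⟩
  have hSempty : ∀ s ∈ Set.Icc (0:ℝ) t, ‖y s‖ < (B + ε) * Real.exp (L * s) := by
    by_contra hcon
    push_neg at hcon
    obtain ⟨s₁, hs₁, hs₁b⟩ := hcon
    have hSne : S.Nonempty := ⟨s₁, hs₁, by rwa [hy'eq s₁ hs₁.1]⟩
    set t₀ := sInf S with ht₀def
    have ht₀S : t₀ ∈ S := hScl.csInf_mem hSne hSbd
    have ht₀Icc : t₀ ∈ Set.Icc (0:ℝ) t := ht₀S.1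
    have ht₀b : (B + ε) * Real.exp (L * t₀) ≤ ‖y t₀‖ := by
      have := ht₀S.2
      rwa [hy'eq t₀ ht₀Icc.1] at this
    -- before t₀ the strict bound holds
    have hlt : ∀ s, 0 ≤ s → s < t₀ → ‖y s‖ ≤ (B + ε) * Real.exp (L * s) := by
      intro s hs hst
      have hsmem : s ∈ Set.Icc (0:ℝ) t := ⟨hs, le_trans hst.le ht₀Icc.2⟩
      have : s ∉ S := notMem_of_lt_csInf hst hSbd
      have : ¬ ((B + ε) * Real.exp (L * s) ≤ ‖y' s‖) := fun hh => this ⟨hsmem, hh⟩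
      rw [hy'eq s hs] at this
      linarith [lt_of_not_ge this]
    have hwin : ∀ s, 0 ≤ s → s < t₀ → segSup hM (seg y s) ≤ (B + ε) * Real.exp (L * s) := by
      intro s hs hst
      have hexp1 : (1:ℝ) ≤ Real.exp (L * s) := by
        rw [← Real.exp_zero]
        exact Real.exp_le_exp.2 (by nlinarith)
      apply segSup_le (by nlinarith)
      intro τ hτ
      show ‖y (s + τ)‖ ≤ _
      rcases le_or_gt (s + τ) 0 with hc | hc
      · have : ‖y (s + τ)‖ ≤ B := h0 _ ⟨by linarith [hτ.1], hc⟩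
        nlinarith
      · have h1 := hlt (s + τ) hc.le (by linarith [hτ.2])
        have h2 : Real.exp (L * (s + τ)) ≤ Real.exp (L * s) := by
          apply Real.exp_le_exp.2
          nlinarith [hτ.2]
        nlinarith
    have hGb2 : ∀ s, 0 ≤ s → s < t₀ → ‖G s‖ ≤ (B + ε) * Real.exp (L * s) * L := by
      intro s hs hst
      calc ‖G s‖ ≤ L * segSup hM (seg y s) := hGb s hs
        _ ≤ L * ((B + ε) * Real.exp (L * s)) := by nlinarith [hwin s hs hst]
        _ = (B + ε) * Real.exp (L * s) * L := by ring
    -- FTC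
    have hFTC : ∫ s in (0:ℝ)..t₀, G s = y t₀ - y 0 := ftc_right hhM hy hG hd le_rfl ht₀Icc.1
    have hGint : IntervalIntegrable (fun s => ‖G s‖) MeasureTheory.volume 0 t₀ := by
      apply ContinuousOn.intervalIntegrable
      apply ContinuousOn.norm
      apply hG.mono
      rw [Set.uIcc_of_le ht₀Icc.1]
      exact fun s hs => hs.1
    have hother : IntervalIntegrable (fun s => (B + ε) * Real.exp (L * s) * L) MeasureTheory.volume 0 t₀ := by
      apply ContinuousOn.intervalIntegrable
      exact Continuous.continuousOn (((continuous_const.mul (Real.continuous_exp.comp (continuous_const.mul continuous_id)))).mul continuous_const)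
    have hmono : (∫ s in (0:ℝ)..t₀, ‖G s‖) ≤ ∫ s in (0:ℝ)..t₀, (B + ε) * Real.exp (L * s) * L := by
      apply intervalIntegral.integral_mono_ae_restrict ht₀Icc.1 hGint hother
      have hae : ∀ᵐ s : ℝ ∂MeasureTheory.volume, s ≠ t₀ := by
        rw [MeasureTheory.ae_iff]
        have hset : {a : ℝ | ¬ a ≠ t₀} = {t₀} := by ext u; simp
        rw [hset]
        exact Real.volume_singleton
      refine ((MeasureTheory.ae_restrict_mem measurableSet_Icc).and
        (MeasureTheory.ae_restrict_of_ae hae)).mono ?_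
      rintro s ⟨hs, hsne⟩
      exact hGb2 s hs.1 (lt_of_le_of_ne hs.2 hsne)
    have hval : ∫ s in (0:ℝ)..t₀, (B + ε) * Real.exp (L * s) * L
        = (B + ε) * Real.exp (L * t₀) - (B + ε) * Real.exp (L * 0) := by
      have hval' := intervalIntegral.integral_eq_sub_of_hasDerivAt
        (f := fun s : ℝ => (B + ε) * Real.exp (L * s))
        (f' := fun s : ℝ => (B + ε) * Real.exp (L * s) * L) (a := 0) (b := t₀)
        (fun s _ => by
          have h1 : HasDerivAt (fun s : ℝ => L * s) L s := by
            simpa using (hasDerivAt_id s).const_mul L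
          have h2 := (h1.exp).const_mul (B + ε)
          rw [mul_assoc]
          exact h2) hother
      simpa using hval'
    have hnorm : ‖y t₀ - y 0‖ ≤ ∫ s in (0:ℝ)..t₀, ‖G s‖ := by
      rw [← hFTC]
      exact intervalIntegral.norm_integral_le_integral_norm ht₀Icc.1
    have : ‖y t₀‖ ≤ ‖y 0‖ + ‖y t₀ - y 0‖ := by
      have := norm_add_le (y 0) (y t₀ - y 0)
      simpa using this
    rw [mul_zero, Real.exp_zero] at hval
    nlinarith [ht₀b]
  have := hSempty t ⟨ht, le_rfl⟩
  linarith

end Helpers4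

section Helpers5

variable {n r : ℕ}

local notation "E" => EuclideanSpace ℝ (Fin n)

lemma shift_solution {hM : ℝ} (hhM : 0 < hM)
    {f : (Fin r → ℝ) → (ℝ → E) → E} {ζ : ℝ → Fin r → ℝ} {x₀ x : ℝ → E}
    (hsol : IsSolution hM f ζ x₀ x) :
    IsSolution hM f (fun s => ζ (s + hM)) (fun s => x (s + hM)) (fun s => x (s + hM)) := by
  obtain ⟨hxc, hxb, hxd⟩ := hsol
  refine ⟨?_, fun τ _ => rfl, ?_⟩
  · exact hxc.comp ((continuous_id.add continuous_const).continuousOn)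
      (fun s hs => by simp only [Set.mem_Ici] at *; linarith)
  · intro t ht
    have hD := hxd (t + hM) (by linarith)
    have hid : HasDerivWithinAt (fun s : ℝ => s + hM) 1 (Set.Ici t) t :=
      (hasDerivWithinAt_id t (Set.Ici t)).add_const hM
    have hmaps : Set.MapsTo (fun s : ℝ => s + hM) (Set.Ici t) (Set.Ici (t + hM)) :=
      fun s hs => by simp only [Set.mem_Ici] at *; linarith
    have := hD.scomp t hid hmaps
    rw [one_smul] at this
    have hseg : seg (fun s => x (s + hM)) t = seg x (t + hM) :=
      funext fun τ => congrArg x (by ring)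
    rw [hseg]
    exact this

set_option maxHeartbeats 1000000 in
lemma sol_bound {hM L C₀ κ : ℝ}
    (hhM : 0 < hM) (hL : 0 < L) (hC₀ : 0 < C₀) (hκ : 0 < κ)
    {A : Set (Fin r → ℝ)}
    {f : (Fin r → ℝ) → (ℝ → E) → E}
    (hfcont : Continuous fun p : (Fin r → ℝ) × C(Set.Icc (-hM) (0:ℝ), E) =>
      f p.1 (fun τ => if h : τ ∈ Set.Icc (-hM) (0:ℝ) then p.2 ⟨τ, h⟩ else 0))
    (hf0 : ∀ ξ ∈ A, f ξ (fun _ => 0) = 0)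
    (hfLip : ∀ ξ ∈ A, ∀ φ ψ : ℝ → E,
      ‖f ξ φ - f ξ ψ‖ ≤ L * segSup hM (fun τ => φ τ - ψ τ))
    {H : Set (ℝ → Fin r → ℝ)} (hHfi : FwdInv H)
    (hHcont : ∀ ζ ∈ H, Continuous ζ) (hHA : ∀ ζ ∈ H, ∀ t ≥ (0:ℝ), ζ t ∈ A)
    (hWexp : ∀ x₀ g, InW hM x₀ g → ∀ ζ ∈ H,
      (∃ x, IsSolution hM f ζ x₀ x) ∧
      ∀ x, IsSolution hM f ζ x₀ x → ∀ t ≥ (0:ℝ),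
        ‖x t‖ ≤ C₀ * Real.exp (-κ * t) * Wnorm hM x₀ g)
    {x₀ : ℝ → E} (hx₀ : ContinuousOn x₀ (Set.Icc (-hM) 0))
    {ζ : ℝ → Fin r → ℝ} (hζ : ζ ∈ H)
    {x : ℝ → E} (hsol : IsSolution hM f ζ x₀ x) :
    ∀ t ≥ (0:ℝ),
      ‖x t‖ ≤ max ((1 + Real.exp (L * hM)) * Real.exp (κ * hM))
          (C₀ * Real.exp (κ * hM) * (1 + Real.exp (L * hM)) *
            Real.sqrt (1 + hM * L ^ 2)) *
        Real.exp (-κ * t) * segSup hM x₀ := by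
  obtain ⟨hxc, hxb, hxd⟩ := hsol
  set B := segSup hM x₀ with hBdef
  have hB : 0 ≤ B := segSup_nonneg hM x₀
  have hx0B : ∀ τ ∈ Set.Icc (-hM) (0:ℝ), ‖x τ‖ ≤ B := by
    intro τ hτ
    rw [hxb τ hτ]
    exact le_segSup hx₀ hτ
  set G : ℝ → E := fun t => f (ζ t) (seg x t) with hGdef
  have hGcont : ContinuousOn G (Set.Ici 0) :=
    cont_f_seg hhM hfcont hfLip (hHcont ζ hζ) (hHA ζ hζ) hxc
  have hGb : ∀ t ≥ (0:ℝ), ‖G t‖ ≤ L * segSup hM (seg x t) :=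
    fun t ht => norm_f_le hhM hf0 hfLip (hHA ζ hζ t ht) _
  have key1 : ∀ t ≥ (0:ℝ), ‖x t‖ ≤ B * Real.exp (L * t) :=
    gronwall_delay hhM hL hB hxc hGcont hxd hGb hx0B
  set M' := Real.exp (L * hM) * B with hM'def
  have hexpLhM : (1:ℝ) ≤ Real.exp (L * hM) := by
    rw [← Real.exp_zero]; exact Real.exp_le_exp.2 (by nlinarith)
  have hM'0 : 0 ≤ M' := by positivity
  have hBM' : B ≤ M' := by nlinarith
  -- bound for the whole trajectory on [-hM, hM]
  have hall : ∀ u : ℝ, -hM ≤ u → u ≤ hM → ‖x u‖ ≤ M' := by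
    intro u h1 h2
    rcases le_or_gt u 0 with hc | hc
    · exact le_trans (hx0B u ⟨h1, hc⟩) hBM'
    · have := key1 u hc.le
      have h3 : Real.exp (L * u) ≤ Real.exp (L * hM) := Real.exp_le_exp.2 (by nlinarith)
      calc ‖x u‖ ≤ B * Real.exp (L * u) := this
        _ ≤ B * Real.exp (L * hM) := by nlinarith
        _ = M' := by rw [hM'def]; ring
  -- shifted objects
  set y : ℝ → E := fun s => x (s + hM) with hydef
  set g : ℝ → E := fun s => G (s + hM) with hgdef
  have hshift : Set.MapsTo (fun s : ℝ => s + hM) (Set.Icc (-hM) 0) (Set.Ici 0) :=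
    fun s hs => by simp only [Set.mem_Icc, Set.mem_Ici] at *; linarith [hs.1]
  have hgcont : ContinuousOn g (Set.Icc (-hM) 0) :=
    hGcont.comp ((continuous_id.add continuous_const).continuousOn) hshift
  have hgb : ∀ s ∈ Set.Icc (-hM) (0:ℝ), ‖g s‖ ≤ L * M' := by
    intro s hs
    have h1 : (0:ℝ) ≤ s + hM := by linarith [hs.1]
    refine le_trans (hGb (s + hM) h1) ?_
    have : segSup hM (seg x (s + hM)) ≤ M' := by
      apply segSup_le hM'0
      intro τ hτ
      exact hall (s + hM + τ) (by linarith [hτ.1, hs.1]) (by linarith [hτ.2, hs.2])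
    nlinarith
  have hInW : InW hM y g := by
    refine ⟨?_, ?_, ?_, ?_⟩
    · exact hxc.comp ((continuous_id.add continuous_const).continuousOn)
        (fun s hs => by simp only [Set.mem_Icc, Set.mem_Ici] at *; linarith [hs.1])
    · exact hgcont.integrableOn_Icc
    · intro t ht
      have hFTC := ftc_right hhM hxc hGcont hxd
        (a := t + hM) (b := hM) (by linarith [ht.1]) (by linarith [ht.2])
      have hchg : ∫ s in t..0, g s = ∫ u in (t + hM)..(0 + hM), G u :=
        intervalIntegral.integral_comp_add_right (fun u => G u) hM
      rw [hchg, zero_add, hFTC]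
      show x (0 + hM) - x (t + hM) = _
      rw [zero_add]
    · exact (hgcont.norm.pow 2).integrableOn_Icc
  have hsolshift : IsSolution hM f (fun s => ζ (s + hM)) y y :=
    shift_solution hhM ⟨hxc, hxb, hxd⟩
  have hζ' : (fun s => ζ (s + hM)) ∈ H := hHfi ζ hζ hM hhM
  have hWb := (hWexp y g hInW _ hζ').2 y hsolshift
  -- bound the W norm
  have hWnorm : Wnorm hM y g ≤ M' * Real.sqrt (1 + hM * L ^ 2) := by
    have hy0 : ‖y 0‖ ≤ M' := by
      show ‖x (0 + hM)‖ ≤ M'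
      rw [zero_add]
      exact hall hM (by linarith) le_rfl
    have hint : (∫ s in (-hM)..0, ‖g s‖ ^ 2) ≤ hM * (L * M') ^ 2 := by
      have h1 : (∫ s in (-hM)..0, ‖g s‖ ^ 2) ≤ ∫ _ in (-hM)..0, (L * M') ^ 2 := by
        apply intervalIntegral.integral_mono_on (by linarith)
        · apply ContinuousOn.intervalIntegrable
          rw [Set.uIcc_of_le (by linarith : -hM ≤ (0:ℝ))]
          exact hgcont.norm.pow 2
        · exact intervalIntegrable_const
        · intro s hs
          have := hgb s hs
          have h0g : (0:ℝ) ≤ ‖g s‖ := norm_nonneg _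
          nlinarith
      have h2 : (∫ _ in (-hM)..0, (L * M') ^ 2 : ℝ) = hM * (L * M') ^ 2 := by
        rw [intervalIntegral.integral_const, smul_eq_mul]
        ring
      linarith
    rw [Wnorm]
    have harg : ‖y 0‖ ^ 2 + (∫ s in (-hM)..0, ‖g s‖ ^ 2) ≤ M' ^ 2 * (1 + hM * L ^ 2) := by
      have : ‖y 0‖ ^ 2 ≤ M' ^ 2 := by nlinarith [norm_nonneg (y 0)]
      nlinarith
    calc Real.sqrt (‖y 0‖ ^ 2 + ∫ s in (-hM)..0, ‖g s‖ ^ 2)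
        ≤ Real.sqrt (M' ^ 2 * (1 + hM * L ^ 2)) := Real.sqrt_le_sqrt harg
      _ = M' * Real.sqrt (1 + hM * L ^ 2) := by
          rw [Real.sqrt_mul (sq_nonneg M'), Real.sqrt_sq hM'0]
  -- assemble
  set K := max ((1 + Real.exp (L * hM)) * Real.exp (κ * hM))
      (C₀ * Real.exp (κ * hM) * (1 + Real.exp (L * hM)) * Real.sqrt (1 + hM * L ^ 2)) with hKdef
  intro t ht
  have hexpt : (0:ℝ) < Real.exp (-κ * t) := Real.exp_pos _
  rcases le_or_gt t hM with hc | hc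
  · -- initial layer
    have h1 := key1 t ht
    have h2 : Real.exp (L * t) ≤ Real.exp (L * hM) := Real.exp_le_exp.2 (by nlinarith)
    have h3 : (1:ℝ) ≤ Real.exp (κ * hM) * Real.exp (-κ * t) := by
      rw [← Real.exp_add, ← Real.exp_zero]
      exact Real.exp_le_exp.2 (by nlinarith)
    have h4 : (1 + Real.exp (L * hM)) * Real.exp (κ * hM) ≤ K := le_max_left _ _
    have h5 : ‖x t‖ ≤ B * Real.exp (L * hM) := by nlinarith
    have h6 : B * Real.exp (L * hM) ≤ K * Real.exp (-κ * t) * B := by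
      have e1 : (0:ℝ) < Real.exp (κ * hM) := Real.exp_pos _
      have e2 : (0:ℝ) < Real.exp (L * hM) := Real.exp_pos _
      calc B * Real.exp (L * hM) ≤ B * ((1 + Real.exp (L * hM)) * (Real.exp (κ * hM) * Real.exp (-κ * t))) := by nlinarith
        _ = ((1 + Real.exp (L * hM)) * Real.exp (κ * hM)) * Real.exp (-κ * t) * B := by ring
        _ ≤ K * Real.exp (-κ * t) * B :=
            mul_le_mul_of_nonneg_right (mul_le_mul_of_nonneg_right h4 hexpt.le) hB
    linarith
  · -- after one delay
    have h0 : (0:ℝ) ≤ t - hM := by linarith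
    have h1 := hWb (t - hM) h0
    have h2 : y (t - hM) = x t := congrArg x (by ring)
    rw [h2] at h1
    have h3 : Real.exp (-κ * (t - hM)) = Real.exp (κ * hM) * Real.exp (-κ * t) := by
      rw [← Real.exp_add]; ring_nf
    have h4 : C₀ * Real.exp (κ * hM) * (1 + Real.exp (L * hM)) * Real.sqrt (1 + hM * L ^ 2) ≤ K :=
      le_max_right _ _
    have hsq : (0:ℝ) ≤ Real.sqrt (1 + hM * L ^ 2) := Real.sqrt_nonneg _
    have hM'le : M' ≤ (1 + Real.exp (L * hM)) * B := by nlinarith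
    have e1 : (0:ℝ) < Real.exp (κ * hM) := Real.exp_pos _
    calc ‖x t‖ ≤ C₀ * Real.exp (-κ * (t - hM)) * Wnorm hM y g := h1
      _ ≤ C₀ * Real.exp (-κ * (t - hM)) * (M' * Real.sqrt (1 + hM * L ^ 2)) := by
          have : (0:ℝ) < C₀ * Real.exp (-κ * (t - hM)) := by positivity
          nlinarith [hWnorm]
      _ = C₀ * Real.exp (κ * hM) * Real.exp (-κ * t) * M' * Real.sqrt (1 + hM * L ^ 2) := by
          rw [h3]; ring
      _ ≤ C₀ * Real.exp (κ * hM) * Real.exp (-κ * t) * ((1 + Real.exp (L * hM)) * B) * Real.sqrt (1 + hM * L ^ 2) := by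
          have hpos : (0:ℝ) ≤ C₀ * Real.exp (κ * hM) * Real.exp (-κ * t) := by positivity
          exact mul_le_mul_of_nonneg_right (mul_le_mul_of_nonneg_left hM'le hpos) hsq
      _ = (C₀ * Real.exp (κ * hM) * (1 + Real.exp (L * hM)) * Real.sqrt (1 + hM * L ^ 2)) * Real.exp (-κ * t) * B := by
          ring
      _ ≤ K * Real.exp (-κ * t) * B :=
          mul_le_mul_of_nonneg_right (mul_le_mul_of_nonneg_right h4 hexpt.le) hB

end Helpers5

section Helpers6

variable {n : ℕ}

local notation "E" => EuclideanSpace ℝ (Fin n)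

lemma approx_W {hM : ℝ} (hhM : 0 < hM) {x₀ : ℝ → E}
    (hx₀ : ContinuousOn x₀ (Set.Icc (-hM) 0)) :
    ∀ ε > (0:ℝ), ∃ p g : ℝ → E, InW hM p g ∧ ∀ τ ∈ Set.Icc (-hM) (0:ℝ), ‖p τ - x₀ τ‖ ≤ ε := by
  intro ε hε
  set ε' : ℝ := ε / (n + 1) with hε'def
  have hε' : 0 < ε' := by positivity
  -- coordinatewise polynomial approximation
  have hcoord : ∀ i : Fin n, ∃ P : Polynomial ℝ,
      ∀ τ ∈ Set.Icc (-hM) (0:ℝ), |P.eval τ - x₀ τ i| < ε' := by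
    intro i
    apply exists_polynomial_near_of_continuousOn
    · exact ((EuclideanSpace.proj (𝕜 := ℝ) i).continuous.comp_continuousOn hx₀)
    · exact hε'
  choose P hP using hcoord
  set p : ℝ → E := fun t => (WithLp.equiv 2 (Fin n → ℝ)).symm (fun i => (P i).eval t) with hpdef
  set g : ℝ → E := fun t =>
    (WithLp.equiv 2 (Fin n → ℝ)).symm (fun i => (P i).derivative.eval t) with hgdef
  have hpd : ∀ t : ℝ, HasDerivAt p (g t) t := by
    intro t
    have hq : HasDerivAt (fun t i => (P i).eval t)
        (fun i => (P i).derivative.eval t) t :=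
      hasDerivAt_pi.2 fun i => (P i).hasDerivAt t
    have := ((PiLp.continuousLinearEquiv 2 ℝ (fun _ : Fin n => ℝ)).symm :
        (∀ _ : Fin n, ℝ) →L[ℝ] E).hasFDerivAt.comp_hasDerivAt t hq
    exact this
  have hgc : Continuous g := by
    apply ((PiLp.continuousLinearEquiv 2 ℝ (fun _ : Fin n => ℝ)).symm.continuous).comp
    exact continuous_pi fun i => (Polynomial.derivative (P i)).continuous
  have hpc : Continuous p := by
    apply ((PiLp.continuousLinearEquiv 2 ℝ (fun _ : Fin n => ℝ)).symm.continuous).comp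
    exact continuous_pi fun i => (P i).continuous
  refine ⟨p, g, ⟨hpc.continuousOn, hgc.continuousOn.integrableOn_Icc, ?_, ?_⟩, ?_⟩
  · intro t _
    exact (intervalIntegral.integral_eq_sub_of_hasDerivAt
      (fun s _ => hpd s) (hgc.intervalIntegrable t 0)).symm
  · exact ((hgc.norm.pow 2).continuousOn).integrableOn_Icc
  · intro τ hτ
    have hco : ∀ i : Fin n, ‖(p τ - x₀ τ) i‖ ≤ ε' := by
      intro i
      have h1 : (p τ - x₀ τ) i = (P i).eval τ - x₀ τ i := by
        rw [PiLp.sub_apply]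
        congr 1
      rw [h1]
      exact (le_of_lt (hP i τ hτ))
    rw [EuclideanSpace.norm_eq]
    have h2 : ∑ i : Fin n, ‖(p τ - x₀ τ) i‖ ^ 2 ≤ ∑ _i : Fin n, ε' ^ 2 := by
      apply Finset.sum_le_sum
      intro i _
      have := hco i
      nlinarith [norm_nonneg ((p τ - x₀ τ) i)]
    have h3 : (∑ _i : Fin n, ε' ^ 2 : ℝ) = n * ε' ^ 2 := by
      rw [Finset.sum_const]
      simp [mul_comm]
    calc Real.sqrt (∑ i : Fin n, ‖(p τ - x₀ τ) i‖ ^ 2)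
        ≤ Real.sqrt ((n : ℝ) * ε' ^ 2) := Real.sqrt_le_sqrt (by rw [← h3]; exact h2)
      _ ≤ Real.sqrt (((n : ℝ) + 1) ^ 2 * ε' ^ 2) := by
          apply Real.sqrt_le_sqrt
          have h4 : (0:ℝ) ≤ (n:ℝ) := Nat.cast_nonneg n
          have h5 : (n:ℝ) ≤ ((n:ℝ) + 1) ^ 2 := by nlinarith
          exact mul_le_mul_of_nonneg_right h5 (sq_nonneg ε')
      _ = ((n : ℝ) + 1) * ε' := by
          rw [← mul_pow, Real.sqrt_sq (by positivity)]
      _ = ε := by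
          rw [hε'def]
          field_simp

end Helpers6

section Helpers7

variable {n r : ℕ}

local notation "E" => EuclideanSpace ℝ (Fin n)

lemma sol_diff_bound {hM L : ℝ} (hhM : 0 < hM) (hL : 0 < L)
    {A : Set (Fin r → ℝ)}
    {f : (Fin r → ℝ) → (ℝ → E) → E}
    (hfcont : Continuous fun p : (Fin r → ℝ) × C(Set.Icc (-hM) (0:ℝ), E) =>
      f p.1 (fun τ => if h : τ ∈ Set.Icc (-hM) (0:ℝ) then p.2 ⟨τ, h⟩ else 0))
    (hfLip : ∀ ξ ∈ A, ∀ φ ψ : ℝ → E,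
      ‖f ξ φ - f ξ ψ‖ ≤ L * segSup hM (fun τ => φ τ - ψ τ))
    {ζ : ℝ → Fin r → ℝ} (hζc : Continuous ζ) (hζA : ∀ t ≥ (0:ℝ), ζ t ∈ A)
    {p₁ p₂ x₁ x₂ : ℝ → E}
    (hsol₁ : IsSolution hM f ζ p₁ x₁) (hsol₂ : IsSolution hM f ζ p₂ x₂)
    {B : ℝ} (hB : 0 ≤ B) (hwin : ∀ τ ∈ Set.Icc (-hM) (0:ℝ), ‖p₁ τ - p₂ τ‖ ≤ B) :
    ∀ t ≥ (0:ℝ), ‖x₁ t - x₂ t‖ ≤ B * Real.exp (L * t) := by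
  obtain ⟨hc₁, hb₁, hd₁⟩ := hsol₁
  obtain ⟨hc₂, hb₂, hd₂⟩ := hsol₂
  apply gronwall_delay hhM hL hB (hc₁.sub hc₂)
    ((cont_f_seg hhM hfcont hfLip hζc hζA hc₁).sub
      (cont_f_seg hhM hfcont hfLip hζc hζA hc₂))
  · exact fun t ht => (hd₁ t ht).sub (hd₂ t ht)
  · intro t ht
    exact hfLip (ζ t) (hζA t ht) (seg x₁ t) (seg x₂ t)
  · intro τ hτ
    rw [Pi.sub_apply, hb₁ τ hτ, hb₂ τ hτ]
    exact hwin τ hτ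

end Helpers7

section Helpers8

variable {n r : ℕ}

local notation "E" => EuclideanSpace ℝ (Fin n)

set_option maxHeartbeats 2000000 in
lemma exists_solution {hM L C₀ κ : ℝ}
    (hhM : 0 < hM) (hL : 0 < L) (hC₀ : 0 < C₀) (hκ : 0 < κ)
    {A : Set (Fin r → ℝ)}
    {f : (Fin r → ℝ) → (ℝ → E) → E}
    (hfcont : Continuous fun p : (Fin r → ℝ) × C(Set.Icc (-hM) (0:ℝ), E) =>
      f p.1 (fun τ => if h : τ ∈ Set.Icc (-hM) (0:ℝ) then p.2 ⟨τ, h⟩ else 0))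
    (hf0 : ∀ ξ ∈ A, f ξ (fun _ => 0) = 0)
    (hfLip : ∀ ξ ∈ A, ∀ φ ψ : ℝ → E,
      ‖f ξ φ - f ξ ψ‖ ≤ L * segSup hM (fun τ => φ τ - ψ τ))
    {H : Set (ℝ → Fin r → ℝ)} (hHfi : FwdInv H)
    (hHcont : ∀ ζ ∈ H, Continuous ζ) (hHA : ∀ ζ ∈ H, ∀ t ≥ (0:ℝ), ζ t ∈ A)
    (hWexp : ∀ x₀ g, InW hM x₀ g → ∀ ζ ∈ H,
      (∃ x, IsSolution hM f ζ x₀ x) ∧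
      ∀ x, IsSolution hM f ζ x₀ x → ∀ t ≥ (0:ℝ),
        ‖x t‖ ≤ C₀ * Real.exp (-κ * t) * Wnorm hM x₀ g)
    {x₀ : ℝ → E} (hx₀ : ContinuousOn x₀ (Set.Icc (-hM) 0))
    {ζ : ℝ → Fin r → ℝ} (hζ : ζ ∈ H) :
    ∃ x, IsSolution hM f ζ x₀ x := by
  -- approximating sequence of `W` initial data
  set ε : ℕ → ℝ := fun k => 1 / (k + 1) with hεdef
  have hεpos : ∀ k, 0 < ε k := fun k => by positivity
  have hεanti : ∀ k l : ℕ, k ≤ l → ε l ≤ ε k := by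
    intro k l hkl
    apply one_div_le_one_div_of_le (by positivity)
    have : (k:ℝ) ≤ l := Nat.cast_le.2 hkl
    linarith
  have hεlim : Filter.Tendsto ε Filter.atTop (nhds 0) :=
    tendsto_one_div_add_atTop_nhds_zero_nat
  have happrox : ∀ k : ℕ, ∃ p g : ℝ → E, InW hM p g ∧
      ∀ τ ∈ Set.Icc (-hM) (0:ℝ), ‖p τ - x₀ τ‖ ≤ ε k :=
    fun k => approx_W hhM hx₀ (ε k) (hεpos k)
  choose p g hpg hperr using happrox
  -- approximating solutions
  have hex : ∀ k : ℕ, ∃ x, IsSolution hM f ζ (p k) x :=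
    fun k => (hWexp (p k) (g k) (hpg k) ζ hζ).1
  choose X hX using hex
  have hXc : ∀ k, ContinuousOn (X k) (Set.Ici (-hM)) := fun k => (hX k).1
  -- uniform difference bound
  have hdiff : ∀ k l : ℕ, ∀ u : ℝ, -hM ≤ u →
      ‖X k u - X l u‖ ≤ (ε k + ε l) * Real.exp (L * max u 0) := by
    intro k l u hu
    have hwin : ∀ τ ∈ Set.Icc (-hM) (0:ℝ), ‖p k τ - p l τ‖ ≤ ε k + ε l := by
      intro τ hτ
      calc ‖p k τ - p l τ‖ = ‖(p k τ - x₀ τ) + (x₀ τ - p l τ)‖ := by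
            rw [sub_add_sub_cancel]
        _ ≤ ‖p k τ - x₀ τ‖ + ‖x₀ τ - p l τ‖ := norm_add_le _ _
        _ ≤ ε k + ε l := by
            rw [norm_sub_rev (x₀ τ)]
            exact add_le_add (hperr k τ hτ) (hperr l τ hτ)
    have hBnn : 0 ≤ ε k + ε l := by positivity
    rcases le_or_gt u 0 with hc | hc
    · have h1 : ‖X k u - X l u‖ ≤ ε k + ε l := by
        rw [(hX k).2.1 u ⟨hu, hc⟩, (hX l).2.1 u ⟨hu, hc⟩]
        exact hwin u ⟨hu, hc⟩
      have h2 : (1:ℝ) ≤ Real.exp (L * max u 0) := by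
        rw [← Real.exp_zero]
        apply Real.exp_le_exp.2
        have : (0:ℝ) ≤ max u 0 := le_max_right _ _
        nlinarith
      nlinarith
    · have := sol_diff_bound hhM hL hfcont hfLip (hHcont ζ hζ) (hHA ζ hζ)
        (hX k) (hX l) hBnn hwin u hc.le
      simpa [max_eq_left hc.le] using this
  -- the limit function
  set Y : ℝ → E := fun u => Filter.limUnder Filter.atTop (fun k => X k (max u (-hM))) with hYdef
  have hcauchy : ∀ u : ℝ, CauchySeq (fun k => X k (max u (-hM))) := by
    intro u
    set v := max u (-hM) with hvdef
    have hv : -hM ≤ v := le_max_right _ _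
    apply cauchySeq_of_le_tendsto_0 (fun N => 2 * ε N * Real.exp (L * max v 0))
    · intro m k N hm hk
      rw [dist_eq_norm]
      calc ‖X m v - X k v‖ ≤ (ε m + ε k) * Real.exp (L * max v 0) := hdiff m k v hv
        _ ≤ 2 * ε N * Real.exp (L * max v 0) := by
            have h1 := hεanti N m hm
            have h2 := hεanti N k hk
            have h3 : (0:ℝ) < Real.exp (L * max v 0) := Real.exp_pos _
            nlinarith
    · have h1 := hεlim.const_mul (2:ℝ)
      rw [mul_zero] at h1
      have h2 := h1.mul_const (Real.exp (L * max v 0))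
      rwa [zero_mul] at h2
  have hYlim : ∀ u : ℝ, Filter.Tendsto (fun k => X k (max u (-hM))) Filter.atTop (nhds (Y u)) :=
    fun u => (hcauchy u).tendsto_limUnder
  have hYlim' : ∀ u : ℝ, -hM ≤ u → Filter.Tendsto (fun k => X k u) Filter.atTop (nhds (Y u)) := by
    intro u hu
    have := hYlim u
    rwa [max_eq_left hu] at this
  -- uniform error bound for the limit
  have hud : ∀ k : ℕ, ∀ u : ℝ, -hM ≤ u → ‖X k u - Y u‖ ≤ 2 * ε k * Real.exp (L * max u 0) := by
    intro k u hu
    have h1 : Filter.Tendsto (fun l => ‖X k u - X l u‖) Filter.atTop (nhds ‖X k u - Y u‖) :=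
      ((tendsto_const_nhds.sub (hYlim' u hu)).norm)
    apply le_of_tendsto h1
    filter_upwards [Filter.eventually_ge_atTop k] with l hl
    calc ‖X k u - X l u‖ ≤ (ε k + ε l) * Real.exp (L * max u 0) := hdiff k l u hu
      _ ≤ 2 * ε k * Real.exp (L * max u 0) := by
          have h2 := hεanti k l hl
          have h3 : (0:ℝ) < Real.exp (L * max u 0) := Real.exp_pos _
          nlinarith
  -- continuity of the limit
  have hYc : ContinuousOn Y (Set.Ici (-hM)) := by
    intro u hu
    simp only [Set.mem_Ici] at hu
    set T : ℝ := max u 0 + 1 with hTdef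
    have hTpos : 0 < T := by positivity
    have huT : u < T := lt_of_le_of_lt (le_max_left u 0) (by linarith)
    have hunif : TendstoUniformlyOn (fun k v => X k v) Y Filter.atTop (Set.Icc (-hM) T) := by
      rw [Metric.tendstoUniformlyOn_iff]
      intro δ hδ
      have hlim0 : Filter.Tendsto (fun k => 2 * ε k * Real.exp (L * T)) Filter.atTop (nhds 0) := by
        have h1 := hεlim.const_mul (2:ℝ)
        rw [mul_zero] at h1
        have h2 := h1.mul_const (Real.exp (L * T))
        rwa [zero_mul] at h2
      filter_upwards [hlim0.eventually (gt_mem_nhds hδ)] with k hk v hv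
      rw [dist_eq_norm, norm_sub_rev]
      calc ‖X k v - Y v‖ ≤ 2 * ε k * Real.exp (L * max v 0) := hud k v hv.1
        _ ≤ 2 * ε k * Real.exp (L * T) := by
            have h2 : max v 0 ≤ T := by
              rcases le_total v 0 with h | h
              · rw [max_eq_right h]; linarith
              · rw [max_eq_left h]; exact hv.2
            have h1 : Real.exp (L * max v 0) ≤ Real.exp (L * T) := by
              apply Real.exp_le_exp.2
              exact mul_le_mul_of_nonneg_left h2 hL.le
            have h3 : (0:ℝ) ≤ 2 * ε k := by positivity
            exact mul_le_mul_of_nonneg_left h1 h3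
        _ < δ := hk
    have hcIcc : ContinuousOn Y (Set.Icc (-hM) T) := by
      apply hunif.continuousOn
      refine Filter.Eventually.frequently (Filter.Eventually.of_forall fun k => ?_)
      exact (hXc k).mono (fun v hv => hv.1)
    have hmem : Set.Icc (-hM) T ∈ nhdsWithin u (Set.Ici (-hM)) := by
      rw [← Set.Ici_inter_Iic]
      apply Filter.inter_mem self_mem_nhdsWithin
      exact mem_nhdsWithin_of_mem_nhds (Iic_mem_nhds huT)
    exact (hcIcc.continuousWithinAt ⟨hu, huT.le⟩).mono_of_mem_nhdsWithin hmem
  -- boundary condition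
  have hYb : ∀ τ ∈ Set.Icc (-hM) (0:ℝ), Y τ = x₀ τ := by
    intro τ hτ
    have h1 : Filter.Tendsto (fun k => X k τ) Filter.atTop (nhds (x₀ τ)) := by
      rw [tendsto_iff_norm_sub_tendsto_zero]
      apply squeeze_zero (fun k => norm_nonneg _) (fun k => ?_) hεlim
      rw [(hX k).2.1 τ hτ]
      exact hperr k τ hτ
    exact tendsto_nhds_unique (hYlim' τ hτ.1) h1
  -- the limit satisfies the integral equation
  set G : ℝ → E := fun t => f (ζ t) (seg Y t) with hGdef
  have hGc : ContinuousOn G (Set.Ici 0) :=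
    cont_f_seg hhM hfcont hfLip (hHcont ζ hζ) (hHA ζ hζ) hYc
  have hinteq : ∀ t ≥ (0:ℝ), Y t = Y 0 + ∫ s in (0:ℝ)..t, G s := by
    intro t ht
    have hGkdiff : ∀ k : ℕ, ∀ s : ℝ, 0 ≤ s → s ≤ t →
        ‖f (ζ s) (seg (X k) s) - G s‖ ≤ L * (2 * ε k * Real.exp (L * t)) := by
      intro k s hs hst
      refine le_trans (hfLip (ζ s) (hHA ζ hζ s hs) _ _) ?_
      have hss : segSup hM (fun τ => seg (X k) s τ - seg Y s τ) ≤ 2 * ε k * Real.exp (L * t) := by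
        apply segSup_le (by positivity)
        intro τ hτ
        have hu : -hM ≤ s + τ := by linarith [hτ.1]
        calc ‖X k (s + τ) - Y (s + τ)‖ ≤ 2 * ε k * Real.exp (L * max (s + τ) 0) := hud k _ hu
          _ ≤ 2 * ε k * Real.exp (L * t) := by
              have h1 : Real.exp (L * max (s + τ) 0) ≤ Real.exp (L * t) := by
                apply Real.exp_le_exp.2
                have h2 : max (s + τ) 0 ≤ t := by
                  rcases le_total (s + τ) 0 with h | h
                  · rw [max_eq_right h]; linarith
                  · rw [max_eq_left h]; linarith [hτ.2]
                nlinarith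
              have h3 : (0:ℝ) ≤ 2 * ε k := by positivity
              nlinarith
      have h4 : 0 ≤ segSup hM (fun τ => seg (X k) s τ - seg Y s τ) := segSup_nonneg _ _
      nlinarith
    -- integral equation for each approximation
    have hXint : ∀ k : ℕ, X k t - X k 0 = ∫ s in (0:ℝ)..t, f (ζ s) (seg (X k) s) := by
      intro k
      exact (ftc_right hhM (hXc k)
        (cont_f_seg hhM hfcont hfLip (hHcont ζ hζ) (hHA ζ hζ) (hXc k))
        (hX k).2.2 le_rfl ht).symm
    have hbound : ∀ k : ℕ, ‖(X k t - X k 0) - ∫ s in (0:ℝ)..t, G s‖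
        ≤ t * (L * (2 * ε k * Real.exp (L * t))) := by
      intro k
      have hGkc : ContinuousOn (fun s => f (ζ s) (seg (X k) s)) (Set.Ici 0) :=
        cont_f_seg hhM hfcont hfLip (hHcont ζ hζ) (hHA ζ hζ) (hXc k)
      have hIk : IntervalIntegrable (fun s => f (ζ s) (seg (X k) s)) MeasureTheory.volume 0 t := by
        apply ContinuousOn.intervalIntegrable
        apply hGkc.mono
        rw [Set.uIcc_of_le ht]
        exact fun s hs => hs.1
      have hIG : IntervalIntegrable G MeasureTheory.volume 0 t := by
        apply ContinuousOn.intervalIntegrable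
        apply hGc.mono
        rw [Set.uIcc_of_le ht]
        exact fun s hs => hs.1
      rw [hXint k, ← intervalIntegral.integral_sub hIk hIG]
      calc ‖∫ s in (0:ℝ)..t, (f (ζ s) (seg (X k) s) - G s)‖
          ≤ ∫ s in (0:ℝ)..t, ‖f (ζ s) (seg (X k) s) - G s‖ :=
            intervalIntegral.norm_integral_le_integral_norm ht
        _ ≤ ∫ _ in (0:ℝ)..t, L * (2 * ε k * Real.exp (L * t)) := by
            apply intervalIntegral.integral_mono_on ht
            · apply ContinuousOn.intervalIntegrable
              apply ContinuousOn.norm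
              apply (hGkc.sub hGc).mono
              rw [Set.uIcc_of_le ht]
              exact fun s hs => hs.1
            · exact intervalIntegrable_const
            · exact fun s hs => hGkdiff k s hs.1 hs.2
        _ = t * (L * (2 * ε k * Real.exp (L * t))) := by
            rw [intervalIntegral.integral_const, smul_eq_mul]
            ring
    have hlhs : Filter.Tendsto (fun k => (X k t - X k 0) - ∫ s in (0:ℝ)..t, G s)
        Filter.atTop (nhds ((Y t - Y 0) - ∫ s in (0:ℝ)..t, G s)) :=
      (((hYlim' t (by linarith)).sub (hYlim' 0 (by linarith))).sub tendsto_const_nhds)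
    have hrhs : Filter.Tendsto (fun k => t * (L * (2 * ε k * Real.exp (L * t))))
        Filter.atTop (nhds 0) := by
      have h1 : Filter.Tendsto (fun k => ε k * (t * L * 2 * Real.exp (L * t)))
          Filter.atTop (nhds 0) := by
        have h2 := hεlim.mul_const (t * L * 2 * Real.exp (L * t))
        rwa [zero_mul] at h2
      convert h1 using 2 with k
      ring
    have : ‖(Y t - Y 0) - ∫ s in (0:ℝ)..t, G s‖ ≤ 0 := by
      apply le_of_tendsto_of_tendsto' hlhs.norm hrhs hbound
    have h0 : (Y t - Y 0) - ∫ s in (0:ℝ)..t, G s = 0 :=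
      norm_le_zero_iff.1 this
    have h1 := sub_eq_zero.1 h0
    exact sub_eq_iff_eq_add'.1 h1
  -- conclude: Y is a solution
  refine ⟨Y, hYc, hYb, ?_⟩
  intro t ht
  have hIG : IntervalIntegrable G MeasureTheory.volume 0 t := by
    apply ContinuousOn.intervalIntegrable
    apply hGc.mono
    rw [Set.uIcc_of_le ht]
    exact fun s hs => hs.1
  have hmeas : StronglyMeasurableAtFilter G (nhdsWithin t (Set.Ioi t)) MeasureTheory.volume := by
    refine ⟨Set.Ioi t, self_mem_nhdsWithin, ?_⟩
    apply ContinuousOn.aestronglyMeasurable _ measurableSet_Ioi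
    exact hGc.mono (fun s hs => le_trans ht (le_of_lt hs))
  have hcw : ContinuousWithinAt G (Set.Ioi t) t :=
    ((hGc t ht).mono (fun s hs => le_trans ht (le_of_lt hs)) : ContinuousWithinAt G (Set.Ioi t) t)
  have hD : HasDerivWithinAt (fun u => ∫ s in (0:ℝ)..u, G s) (G t) (Set.Ici t) t :=
    intervalIntegral.integral_hasDerivWithinAt_right hIG hmeas hcw
  have hD2 : HasDerivWithinAt (fun u => Y 0 + ∫ s in (0:ℝ)..u, G s) (G t) (Set.Ici t) t :=
    hD.const_add (Y 0)
  exact hD2.congr (fun u hu => hinteq u (le_trans ht hu)) (hinteq t ht)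

end Helpers8

/-- exponential stability transfer. If the system is
`(W,H)`-globally exponentially stable with constants `C₀, κ > 0`, `f` is globally
Lipschitz with constant `L` in the second argument uniformly in the first with
`f(·,0)=0`, and `H` is forward invariant, then it is `(C⁰,H)`-globally
exponentially stable with decay rate `κ` and constant
`C̃₀ = max((1+e^{L h_M}) e^{κ h_M}, C₀ e^{κ h_M} (1+e^{L h_M}) √(1+h_M L²))`. -/
theorem W_exp_stability_implies_C0_exp_stability {n r : ℕ} (hM L C₀ κ : ℝ)
    (hhM : 0 < hM) (hL : 0 < L) (hC₀ : 0 < C₀) (hκ : 0 < κ)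
    (A : Set (Fin r → ℝ))
    (f : (Fin r → ℝ) → (ℝ → EuclideanSpace ℝ (Fin n)) → EuclideanSpace ℝ (Fin n))
    (hfcont : Continuous fun p : (Fin r → ℝ) × C(Set.Icc (-hM) (0:ℝ), EuclideanSpace ℝ (Fin n)) =>
      f p.1 (fun τ => if h : τ ∈ Set.Icc (-hM) (0:ℝ) then p.2 ⟨τ, h⟩ else 0))
    (hf0 : ∀ ξ ∈ A, f ξ (fun _ => 0) = 0)
    (hfLip : ∀ ξ ∈ A, ∀ φ ψ : ℝ → EuclideanSpace ℝ (Fin n),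
      ‖f ξ φ - f ξ ψ‖ ≤ L * segSup hM (fun τ => φ τ - ψ τ))
    (H : Set (ℝ → Fin r → ℝ)) (hHfi : FwdInv H)
    (hHcont : ∀ ζ ∈ H, Continuous ζ) (hHA : ∀ ζ ∈ H, ∀ t ≥ (0:ℝ), ζ t ∈ A)
    (hWexp : ∀ x₀ g, InW hM x₀ g → ∀ ζ ∈ H,
      (∃ x, IsSolution hM f ζ x₀ x) ∧
      ∀ x, IsSolution hM f ζ x₀ x → ∀ t ≥ (0:ℝ),
        ‖x t‖ ≤ C₀ * Real.exp (-κ * t) * Wnorm hM x₀ g) :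
    ∀ x₀ : ℝ → EuclideanSpace ℝ (Fin n), ContinuousOn x₀ (Set.Icc (-hM) 0) →
      ∀ ζ ∈ H,
        (∃ x, IsSolution hM f ζ x₀ x) ∧
        ∀ x, IsSolution hM f ζ x₀ x → ∀ t ≥ (0:ℝ),
          ‖x t‖ ≤ max ((1 + Real.exp (L * hM)) * Real.exp (κ * hM))
              (C₀ * Real.exp (κ * hM) * (1 + Real.exp (L * hM)) *
                Real.sqrt (1 + hM * L ^ 2)) *
            Real.exp (-κ * t) * segSup hM x₀ := by
  intro x₀ hx₀ ζ hζ
  refine ⟨exists_solution hhM hL hC₀ hκ hfcont hf0 hfLip hHfi hHcont hHA hWexp hx₀ hζ, ?_⟩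
  intro x hsol t ht
  exact sol_bound hhM hL hC₀ hκ hfcont hf0 hfLip hHfi hHcont hHA hWexp hx₀ hζ hsol t ht
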